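/- Let w be a trapezoidal word over {a,b}. If w is closed, then H_w = K_w and L_w = R_w; if w is open, then H_w = R_w and L_w = K_w. -/

import Mathlib

/-- The two-letter alphabet {a, b}. -/
inductive AB : Type
  | a : AB
  | b : AB
deriving DecidableEq, Repr

/-- A (finite) word over {a, b}. -/
abbrev Word := List AB

open AB

/-- `u` occurs in `w` at position `i`. -/
def OccursAt (u w : Word) (i : ℕ) : Prop :=
  i + u.length ≤ w.length ∧ (w.drop i).take u.length = u

/-- `u` occurs exactly once in `w` (is unrepeated in `w`). -/
def OccursOnce (u w : Word) : Prop := ∃! i, OccursAt u w i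

/-- `u` is a right special factor of `w`: both `ua` and `ub` are factors of `w`. -/
def IsRightSpecial (u w : Word) : Prop := (u ++ [a]) <:+: w ∧ (u ++ [b]) <:+: w

/-- `u` is a left special factor of `w`: both `au` and `bu` are factors of `w`. -/
def IsLeftSpecial (u w : Word) : Prop := ([a] ++ u) <:+: w ∧ ([b] ++ u) <:+: w

/-- `K w`: the length of the shortest unrepeated suffix of `w`. -/
noncomputable def Kp (w : Word) : ℕ := sInf {n | ∃ s : Word, s <:+ w ∧ s.length = n ∧ OccursOnce s w}

/-- `H w`: the length of the shortest unrepeated prefix of `w`. -/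
noncomputable def Hp (w : Word) : ℕ := sInf {n | ∃ p : Word, p <+: w ∧ p.length = n ∧ OccursOnce p w}

/-- `R w`: the smallest `n ≥ 0` such that `w` has no right special factor of length `n`. -/
noncomputable def Rp (w : Word) : ℕ := sInf {n | ∀ u : Word, u.length = n → ¬ IsRightSpecial u w}

/-- `L w`: the smallest `n ≥ 0` such that `w` has no left special factor of length `n`. -/
noncomputable def Lp (w : Word) : ℕ := sInf {n | ∀ u : Word, u.length = n → ¬ IsLeftSpecial u w}

/-- A word `w` is trapezoidal if `|w| = K w + R w`. -/
def IsTrapezoidal (w : Word) : Prop := w.length = Kp w + Rp w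

/-- A finite word over `{a,b}` is Sturmian iff it is balanced: there is no word `u`
with both `aua` and `bub` factors of `w`. -/
def IsSturmian (w : Word) : Prop :=
  ¬ ∃ u : Word, ([a] ++ u ++ [a]) <:+: w ∧ ([b] ++ u ++ [b]) <:+: w

/-- A nonempty word is closed if it has a border (a proper prefix which is also a suffix)
whose only occurrences in `w` are as a prefix and as a suffix. -/
def IsClosedWord (w : Word) : Prop :=
  w ≠ [] ∧ ∃ v : Word, v <+: w ∧ v.length < w.length ∧ v <:+ w ∧
    ∀ i : ℕ, OccursAt v w i → i = 0 ∨ i + v.length = w.length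

/-- A nonempty word is open if it is not closed. -/
def IsOpenWord (w : Word) : Prop := w ≠ [] ∧ ¬ IsClosedWord w

/-- Central words: `a^n`, `b^n`, or `u a b v = v b a u`. -/
def IsCentral (w : Word) : Prop :=
  (∃ n : ℕ, w = List.replicate n a) ∨ (∃ n : ℕ, w = List.replicate n b) ∨
  (∃ u v : Word, w = u ++ [a, b] ++ v ∧ w = v ++ [b, a] ++ u)

/-- The minimal period of `w`: `|w|` minus the length of the longest border of `w`. -/
noncomputable def minPeriod (w : Word) : ℕ :=
  w.length - sSup {n | ∃ v : Word, v.length = n ∧ v <+: w ∧ v ≠ w ∧ v <:+ w}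

/-! ### Infrastructure -/

section Infra

open List

lemma occursAt_iff_prefix_drop {u w : Word} {i : ℕ} :
    OccursAt u w i ↔ i + u.length ≤ w.length ∧ u <+: w.drop i := by
  unfold OccursAt
  rw [List.prefix_iff_eq_take, eq_comm]

lemma OccursAt.infix {u w : Word} {i : ℕ} (h : OccursAt u w i) : u <:+: w := by
  rw [occursAt_iff_prefix_drop] at h
  exact h.2.isInfix.trans (w.drop_suffix i).isInfix

lemma infix_iff_occursAt {u w : Word} : u <:+: w ↔ ∃ i, OccursAt u w i := by
  constructor
  · rintro ⟨s, t, rfl⟩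
    refine ⟨s.length, ?_⟩
    rw [occursAt_iff_prefix_drop]
    constructor
    · simp [Nat.add_le_add_iff_left]
    · rw [List.append_assoc, List.drop_left]
      exact ⟨t, rfl⟩
  · rintro ⟨i, h⟩
    exact h.infix

lemma occursAt_zero_iff {u w : Word} : OccursAt u w 0 ↔ u <+: w := by
  rw [occursAt_iff_prefix_drop]
  simp only [List.drop_zero, Nat.zero_add]
  exact ⟨fun h => h.2, fun h => ⟨h.length_le, h⟩⟩

lemma prefix_eq_take {u w : Word} (h : u <+: w) : u = w.take u.length :=
  List.prefix_iff_eq_take.mp h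

lemma suffix_eq_drop {u w : Word} (h : u <:+ w) : u = w.drop (w.length - u.length) :=
  List.suffix_iff_eq_drop.mp h

lemma occursAt_end_iff {u w : Word} (h : u.length ≤ w.length) :
    OccursAt u w (w.length - u.length) ↔ u <:+ w := by
  rw [occursAt_iff_prefix_drop]
  constructor
  · rintro ⟨h1, h2⟩
    have hl : (w.drop (w.length - u.length)).length = u.length := by
      simp; omega
    rw [h2.eq_of_length (by omega)]
    exact List.drop_suffix _ _
  · intro hs
    refine ⟨by omega, ?_⟩
    rw [← List.suffix_iff_eq_drop.mp hs]

lemma OccursAt.suffix_of_end {u w : Word} {i : ℕ} (h : OccursAt u w i)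
    (he : i + u.length = w.length) : u <:+ w := by
  have : i = w.length - u.length := by omega
  subst this
  exact (occursAt_end_iff (by omega)).mp h

lemma prefix_append_iff' {u v l : Word} :
    u ++ v <+: l ↔ u <+: l ∧ v <+: l.drop u.length := by
  constructor
  · rintro ⟨t, rfl⟩
    constructor
    · exact ⟨v ++ t, by simp⟩
    · rw [List.append_assoc, List.drop_left]
      exact ⟨t, rfl⟩
  · rintro ⟨⟨t1, rfl⟩, h2⟩
    rw [List.drop_left] at h2
    obtain ⟨t2, rfl⟩ := h2
    exact ⟨t2, by simp⟩

lemma occursAt_append_iff {u v w : Word} {i : ℕ} :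
    OccursAt (u ++ v) w i ↔ OccursAt u w i ∧ OccursAt v w (i + u.length) := by
  simp only [occursAt_iff_prefix_drop, List.length_append]
  rw [prefix_append_iff', List.drop_drop]
  constructor
  · rintro ⟨h1, h2, h3⟩
    exact ⟨⟨by omega, h2⟩, ⟨by omega, h3⟩⟩
  · rintro ⟨⟨h1, h2⟩, h3, h4⟩
    exact ⟨by omega, h2, h4⟩

lemma occursAt_singleton {w : Word} {j : ℕ} (h : j < w.length) :
    OccursAt [w[j]] w j := by
  rw [occursAt_iff_prefix_drop]
  refine ⟨by simpa using h, ?_⟩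
  rw [List.drop_eq_getElem_cons h]
  exact ⟨w.drop (j+1), rfl⟩

lemma OccursAt.next_letter {u w : Word} {i : ℕ} (h : OccursAt u w i)
    (hl : i + u.length < w.length) :
    OccursAt (u ++ [w[i + u.length]]) w i :=
  occursAt_append_iff.mpr ⟨h, occursAt_singleton hl⟩

lemma OccursAt.cons {c : AB} {u w : Word} {i : ℕ} (h : OccursAt (c :: u) w i) :
    OccursAt u w (i + 1) := by
  have : c :: u = [c] ++ u := rfl
  rw [this, occursAt_append_iff] at h
  simpa using h.2

end Infra

section Params

open List

def SHset (w : Word) : Set ℕ := {n | ∃ p : Word, p <+: w ∧ p.length = n ∧ OccursOnce p w}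
def SKset (w : Word) : Set ℕ := {n | ∃ s : Word, s <:+ w ∧ s.length = n ∧ OccursOnce s w}
def SRset (w : Word) : Set ℕ := {n | ∀ u : Word, u.length = n → ¬ IsRightSpecial u w}
def SLset (w : Word) : Set ℕ := {n | ∀ u : Word, u.length = n → ¬ IsLeftSpecial u w}

lemma Hp_def (w : Word) : Hp w = sInf (SHset w) := rfl
lemma Kp_def (w : Word) : Kp w = sInf (SKset w) := rfl
lemma Rp_def (w : Word) : Rp w = sInf (SRset w) := rfl
lemma Lp_def (w : Word) : Lp w = sInf (SLset w) := rfl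

lemma occursOnce_word (w : Word) : OccursOnce w w := by
  refine ⟨0, occursAt_zero_iff.mpr prefix_rfl, fun i hi => ?_⟩
  have := hi.1
  omega

lemma mem_SHset_iff {w : Word} {n : ℕ} :
    n ∈ SHset w ↔ n ≤ w.length ∧ OccursOnce (w.take n) w := by
  constructor
  · rintro ⟨p, hp, rfl, ho⟩
    have := prefix_eq_take hp
    exact ⟨hp.length_le, this ▸ ho⟩
  · rintro ⟨h1, h2⟩
    exact ⟨w.take n, w.take_prefix n, by simp [h1], h2⟩

lemma mem_SKset_iff {w : Word} {n : ℕ} :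
    n ∈ SKset w ↔ n ≤ w.length ∧ OccursOnce (w.drop (w.length - n)) w := by
  constructor
  · rintro ⟨s, hs, rfl, ho⟩
    have := suffix_eq_drop hs
    exact ⟨hs.length_le, this ▸ ho⟩
  · rintro ⟨h1, h2⟩
    exact ⟨w.drop (w.length - n), w.drop_suffix _, by simp; omega, h2⟩

lemma length_mem_SHset (w : Word) : w.length ∈ SHset w :=
  ⟨w, prefix_rfl, rfl, occursOnce_word w⟩

lemma length_mem_SKset (w : Word) : w.length ∈ SKset w :=
  ⟨w, suffix_rfl, rfl, occursOnce_word w⟩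

lemma Hp_le_length (w : Word) : Hp w ≤ w.length := Nat.sInf_le (length_mem_SHset w)
lemma Kp_le_length (w : Word) : Kp w ≤ w.length := Nat.sInf_le (length_mem_SKset w)

lemma take_succ_eq {w : Word} {n : ℕ} (h : n < w.length) :
    w.take (n + 1) = w.take n ++ [w[n]] := by
  rw [List.take_succ, List.getElem?_eq_getElem h]
  rfl

lemma drop_sub_succ_eq {w : Word} {n : ℕ} (h : n + 1 ≤ w.length) :
    w.drop (w.length - (n+1)) = w[w.length - (n+1)] :: w.drop (w.length - n) := by
  have h2 : w.length - (n+1) < w.length := by omega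
  have h3 : w.length - (n+1) + 1 = w.length - n := by omega
  rw [List.drop_eq_getElem_cons h2, h3]

lemma SH_succ {w : Word} {n : ℕ} (h : n + 1 ≤ w.length)
    (h1 : OccursOnce (w.take n) w) : OccursOnce (w.take (n+1)) w := by
  have htk := take_succ_eq (show n < w.length by omega)
  refine ⟨0, occursAt_zero_iff.mpr (w.take_prefix _), fun i hi => ?_⟩
  obtain ⟨j, hj, hju⟩ := h1
  have hj0 : j = 0 := (hju 0 (occursAt_zero_iff.mpr (w.take_prefix _))).symm
  have : OccursAt (w.take n) w i := by
    rw [htk, occursAt_append_iff] at hi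
    exact hi.1
  rw [hju i this, hj0]

lemma SK_succ {w : Word} {n : ℕ} (h : n + 1 ≤ w.length)
    (h1 : OccursOnce (w.drop (w.length - n)) w) :
    OccursOnce (w.drop (w.length - (n+1))) w := by
  have hdr := drop_sub_succ_eq h
  have hlen : (w.drop (w.length - (n+1))).length = n + 1 := by simp; omega
  have hocc : OccursAt (w.drop (w.length - (n+1))) w (w.length - (n+1)) := by
    have := (occursAt_end_iff (u := w.drop (w.length - (n+1))) (w := w) (by omega)).mpr
      (w.drop_suffix _)
    rwa [hlen] at this
  refine ⟨w.length - (n+1), hocc, fun i hi => ?_⟩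
  obtain ⟨j, hj, hju⟩ := h1
  have hjval : j = w.length - n := by
    have hlen2 : (w.drop (w.length - n)).length = n := by simp; omega
    have := (occursAt_end_iff (u := w.drop (w.length - n)) (w := w) (by omega)).mpr
      (w.drop_suffix _)
    rw [hlen2] at this
    exact (hju _ this).symm
  have : OccursAt (w.drop (w.length - n)) w (i + 1) := by
    rw [hdr] at hi
    exact hi.cons
  have h5 := hju _ this
  rw [hjval] at h5
  omega

lemma Hp_le_iff {w : Word} {n : ℕ} (h : n ≤ w.length) :
    Hp w ≤ n ↔ OccursOnce (w.take n) w := by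
  constructor
  · intro hle
    have hm := Nat.sInf_mem (⟨w.length, length_mem_SHset w⟩ : (SHset w).Nonempty)
    rw [← Hp_def] at hm
    obtain ⟨hle', ho⟩ := mem_SHset_iff.mp hm
    clear hm
    induction n with
    | zero => simpa [Nat.le_zero.mp hle] using ho
    | succ m ih =>
      rcases Nat.lt_or_ge (Hp w) (m+1) with h' | h'
      · exact SH_succ h (ih (by omega) (by omega))
      · have : Hp w = m + 1 := by omega
        rwa [← this]
  · intro ho
    exact Nat.sInf_le (mem_SHset_iff.mpr ⟨h, ho⟩)

lemma Kp_le_iff {w : Word} {n : ℕ} (h : n ≤ w.length) :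
    Kp w ≤ n ↔ OccursOnce (w.drop (w.length - n)) w := by
  constructor
  · intro hle
    have hm := Nat.sInf_mem (⟨w.length, length_mem_SKset w⟩ : (SKset w).Nonempty)
    rw [← Kp_def] at hm
    obtain ⟨hle', ho⟩ := mem_SKset_iff.mp hm
    clear hm
    induction n with
    | zero => simpa [Nat.le_zero.mp hle] using ho
    | succ m ih =>
      rcases Nat.lt_or_ge (Kp w) (m+1) with h' | h'
      · exact SK_succ h (ih (by omega) (by omega))
      · have : Kp w = m + 1 := by omega
        rwa [← this]
  · intro ho
    exact Nat.sInf_le (mem_SKset_iff.mpr ⟨h, ho⟩)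

lemma SR_upward {w : Word} {m n : ℕ} (hm : m ∈ SRset w) (hmn : m ≤ n) : n ∈ SRset w := by
  induction n, hmn using Nat.le_induction with
  | base => exact hm
  | succ k hk ih =>
    intro u hlen ⟨ha, hb⟩
    refine ih (u.drop 1) (by simp [hlen]) ⟨?_, ?_⟩
    · have : u.drop 1 ++ [a] = (u ++ [a]).drop 1 := by
        rw [List.drop_append_of_le_length (by omega)]
      rw [this]
      exact ((u ++ [a]).drop_suffix 1).isInfix.trans ha
    · have : u.drop 1 ++ [b] = (u ++ [b]).drop 1 := by
        rw [List.drop_append_of_le_length (by omega)]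
      rw [this]
      exact ((u ++ [b]).drop_suffix 1).isInfix.trans hb

lemma SL_upward {w : Word} {m n : ℕ} (hm : m ∈ SLset w) (hmn : m ≤ n) : n ∈ SLset w := by
  induction n, hmn using Nat.le_induction with
  | base => exact hm
  | succ k hk ih =>
    intro u hlen ⟨ha, hb⟩
    refine ih (u.take k) (by simp [hlen]) ⟨?_, ?_⟩
    · have : [a] ++ u.take k = ([a] ++ u).take (k+1) := by
        simp [List.take_append_of_le_length]
      rw [this]
      exact (([a] ++ u).take_prefix (k+1)).isInfix.trans ha
    · have : [b] ++ u.take k = ([b] ++ u).take (k+1) := by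
        simp [List.take_append_of_le_length]
      rw [this]
      exact (([b] ++ u).take_prefix (k+1)).isInfix.trans hb

lemma length_mem_SRset (w : Word) : w.length ∈ SRset w := by
  intro u hlen ⟨ha, _⟩
  have := ha.length_le
  simp [hlen] at this

lemma length_mem_SLset (w : Word) : w.length ∈ SLset w := by
  intro u hlen ⟨ha, _⟩
  have := ha.length_le
  simp [hlen] at this

lemma Rp_le_length (w : Word) : Rp w ≤ w.length := Nat.sInf_le (length_mem_SRset w)
lemma Lp_le_length (w : Word) : Lp w ≤ w.length := Nat.sInf_le (length_mem_SLset w)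

lemma lt_Rp_iff {w : Word} {n : ℕ} :
    n < Rp w ↔ ∃ u : Word, u.length = n ∧ IsRightSpecial u w := by
  constructor
  · intro h
    by_contra hc
    push_neg at hc
    have : n ∈ SRset w := fun u hu => hc u hu
    have := Nat.sInf_le this
    rw [← Rp_def] at this
    omega
  · rintro ⟨u, hlen, hRS⟩
    by_contra hc
    push_neg at hc
    have hmem : Rp w ∈ SRset w := by
      rw [Rp_def]
      exact Nat.sInf_mem ⟨w.length, length_mem_SRset w⟩
    exact SR_upward hmem hc u hlen hRS

lemma lt_Lp_iff {w : Word} {n : ℕ} :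
    n < Lp w ↔ ∃ u : Word, u.length = n ∧ IsLeftSpecial u w := by
  constructor
  · intro h
    by_contra hc
    push_neg at hc
    have : n ∈ SLset w := fun u hu => hc u hu
    have := Nat.sInf_le this
    rw [← Lp_def] at this
    omega
  · rintro ⟨u, hlen, hRS⟩
    by_contra hc
    push_neg at hc
    have hmem : Lp w ∈ SLset w := by
      rw [Lp_def]
      exact Nat.sInf_mem ⟨w.length, length_mem_SLset w⟩
    exact SL_upward hmem hc u hlen hRS

end Params

section Counting

open List Finset

instance decOccursAt (u w : Word) (i : ℕ) : Decidable (OccursAt u w i) := by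
  unfold OccursAt; infer_instance

instance decRS (u w : Word) : Decidable (IsRightSpecial u w) := by
  unfold IsRightSpecial; infer_instance

instance decLS (u w : Word) : Decidable (IsLeftSpecial u w) := by
  unfold IsLeftSpecial; infer_instance

/-- The factors of `w` of length `n`, as a finset. -/
def FN (w : Word) (n : ℕ) : Finset Word :=
  ((Finset.range (w.length + 1)).image (fun i => (w.drop i).take n)).filter
    (fun u => u.length = n)

lemma mem_FN {w u : Word} {n : ℕ} : u ∈ FN w n ↔ u <:+: w ∧ u.length = n := by
  simp only [FN, Finset.mem_filter, Finset.mem_image, Finset.mem_range]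
  constructor
  · rintro ⟨⟨i, hi, rfl⟩, hlen⟩
    exact ⟨((w.drop i).take_prefix n).isInfix.trans (w.drop_suffix i).isInfix, hlen⟩
  · rintro ⟨hinf, hlen⟩
    obtain ⟨i, hocc⟩ := infix_iff_occursAt.mp hinf
    obtain ⟨hb, ht⟩ := hocc
    refine ⟨⟨i, by omega, ?_⟩, hlen⟩
    rw [← hlen]
    exact ht
  
lemma FN_zero (w : Word) : FN w 0 = {[]} := by
  ext u
  simp [mem_FN, List.length_eq_zero_iff]
  intro h
  subst h
  exact w.nil_infix

lemma FN_card_zero (w : Word) : (FN w 0).card = 1 := by rw [FN_zero]; rfl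

lemma FN_eq_empty {w : Word} {n : ℕ} (h : w.length < n) : FN w n = ∅ := by
  ext u
  simp only [mem_FN, Finset.notMem_empty, iff_false, not_and]
  intro hinf hlen
  have := hinf.length_le
  omega

lemma RS_iff_mem_FN {w u : Word} {n : ℕ} (hu : u ∈ FN w n) :
    IsRightSpecial u w ↔ (u ++ [a] ∈ FN w (n+1) ∧ u ++ [b] ∈ FN w (n+1)) := by
  have hlen := (mem_FN.mp hu).2
  constructor
  · rintro ⟨ha, hb⟩
    exact ⟨mem_FN.mpr ⟨ha, by simp [hlen]⟩, mem_FN.mpr ⟨hb, by simp [hlen]⟩⟩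
  · rintro ⟨ha, hb⟩
    exact ⟨(mem_FN.mp ha).1, (mem_FN.mp hb).1⟩

lemma LS_iff_mem_FN {w u : Word} {n : ℕ} (hu : u ∈ FN w n) :
    IsLeftSpecial u w ↔ ([a] ++ u ∈ FN w (n+1) ∧ [b] ++ u ∈ FN w (n+1)) := by
  have hlen := (mem_FN.mp hu).2
  constructor
  · rintro ⟨ha, hb⟩
    exact ⟨mem_FN.mpr ⟨ha, by simp [hlen]⟩, mem_FN.mpr ⟨hb, by simp [hlen]⟩⟩
  · rintro ⟨ha, hb⟩
    exact ⟨(mem_FN.mp ha).1, (mem_FN.mp hb).1⟩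

lemma card_filter_pair {x y : Word} (hxy : x ≠ y) (P : Word → Prop) [DecidablePred P] :
    (({x, y} : Finset Word).filter P).card
      = (if P x then 1 else 0) + (if P y then 1 else 0) := by
  rw [show ({x, y} : Finset Word) = insert x {y} from rfl, Finset.filter_insert,
    Finset.filter_singleton]
  split_ifs with h1 h2 h2
  · rw [Finset.card_insert_of_notMem (by simp [hxy])]
    rfl
  · simp
  · simp
  · simp

/-- Dead end on the right: `u` extends to no longer factor iff it is the
unrepeated suffix of length `n`. -/
lemma dead_right_iff {w u : Word} {n : ℕ} (hn : n ≤ w.length) (hu : u ∈ FN w n) :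
    (u ++ [a] ∉ FN w (n+1) ∧ u ++ [b] ∉ FN w (n+1)) ↔
      (u = w.drop (w.length - n) ∧ Kp w ≤ n) := by
  obtain ⟨hinf, hlen⟩ := mem_FN.mp hu
  constructor
  · rintro ⟨hna, hnb⟩
    have hend : ∀ i, OccursAt u w i → i + n = w.length := by
      intro i hi
      by_contra hne
      have hlt : i + n < w.length := by
        have := hi.1; omega
      have hocc := hi.next_letter (by omega)
      have : u ++ [w[i + u.length]] ∈ FN w (n+1) :=
        mem_FN.mpr ⟨hocc.infix, by simp [hlen]⟩
      cases hc : w[i + u.length] with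
      | a => rw [hc] at this; exact hna this
      | b => rw [hc] at this; exact hnb this
    obtain ⟨i, hi⟩ := infix_iff_occursAt.mp hinf
    have hieq : i = w.length - n := by have := hend i hi; omega
    have hsuf : u <:+ w := hi.suffix_of_end (by rw [hlen]; exact hend i hi)
    have hueq : u = w.drop (w.length - n) := by
      have := suffix_eq_drop hsuf
      rwa [hlen] at this
    refine ⟨hueq, (Kp_le_iff hn).mpr ?_⟩
    rw [← hueq]
    refine ⟨w.length - n, hieq ▸ hi, fun j hj => ?_⟩
    have := hend j hj
    omega
  · rintro ⟨rfl, hK⟩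
    have honce := (Kp_le_iff hn).mp hK
    obtain ⟨j0, hj0, hj0u⟩ := honce
    have hj0eq : j0 = w.length - n := by
      have hlen2 : (w.drop (w.length - n)).length = n := by simp; omega
      have hocc := (occursAt_end_iff (u := w.drop (w.length - n)) (w := w) (by omega)).mpr
        (w.drop_suffix _)
      rw [hlen2] at hocc
      exact (hj0u _ hocc).symm
    constructor <;>
    · intro hmem
      obtain ⟨j, hj⟩ := infix_iff_occursAt.mp (mem_FN.mp hmem).1
      rw [occursAt_append_iff] at hj
      have hju : j = w.length - n := by rw [← hj0eq]; exact hj0u _ hj.1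
      have := hj.2.1
      simp [hlen] at this
      omega

/-- Dead end on the left. -/
lemma dead_left_iff {w u : Word} {n : ℕ} (hn : n ≤ w.length) (hu : u ∈ FN w n) :
    ([a] ++ u ∉ FN w (n+1) ∧ [b] ++ u ∉ FN w (n+1)) ↔
      (u = w.take n ∧ Hp w ≤ n) := by
  obtain ⟨hinf, hlen⟩ := mem_FN.mp hu
  constructor
  · rintro ⟨hna, hnb⟩
    have hzero : ∀ i, OccursAt u w i → i = 0 := by
      intro i hi
      by_contra hne
      have hi1 : i - 1 < w.length := by have := hi.1; omega
      have hocc : OccursAt ([w[i-1]] ++ u) w (i - 1) := by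
        refine occursAt_append_iff.mpr ⟨occursAt_singleton hi1, ?_⟩
        have : i - 1 + ([w[i-1]] : Word).length = i := by simp; omega
        rwa [this]
      have : [w[i-1]] ++ u ∈ FN w (n+1) :=
        mem_FN.mpr ⟨hocc.infix, by simp [hlen]⟩
      cases hc : w[i-1] with
      | a => rw [hc] at this; exact hna this
      | b => rw [hc] at this; exact hnb this
    obtain ⟨i, hi⟩ := infix_iff_occursAt.mp hinf
    have hieq : i = 0 := hzero i hi
    subst hieq
    have hpre : u <+: w := occursAt_zero_iff.mp hi
    have hueq : u = w.take n := by
      have := prefix_eq_take hpre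
      rwa [hlen] at this
    refine ⟨hueq, (Hp_le_iff hn).mpr ?_⟩
    rw [← hueq]
    exact ⟨0, hi, fun j hj => hzero j hj⟩
  · rintro ⟨rfl, hH⟩
    have honce := (Hp_le_iff hn).mp hH
    obtain ⟨j0, hj0, hj0u⟩ := honce
    have hj0eq : j0 = 0 :=
      (hj0u 0 (occursAt_zero_iff.mpr (w.take_prefix n))).symm
    constructor <;>
    · intro hmem
      obtain ⟨j, hj⟩ := infix_iff_occursAt.mp (mem_FN.mp hmem).1
      rw [occursAt_append_iff] at hj
      have h6 := hj0u _ hj.2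
      rw [hj0eq] at h6
      simp only [List.length_singleton] at h6
      omega

end Counting

section Identities

open List Finset

lemma fiber_right_card {w : Word} {n : ℕ} {u : Word} (hu : u ∈ FN w n) :
    ((FN w (n+1)).filter (fun v => v.take n = u)).card
      = (if u ++ [a] ∈ FN w (n+1) then 1 else 0)
        + (if u ++ [b] ∈ FN w (n+1) then 1 else 0) := by
  have hlen := (mem_FN.mp hu).2
  have hset : (FN w (n+1)).filter (fun v => v.take n = u)
      = ({u ++ [a], u ++ [b]} : Finset Word).filter (fun v => v ∈ FN w (n+1)) := by
    ext v
    simp only [Finset.mem_filter, Finset.mem_insert, Finset.mem_singleton]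
    constructor
    · rintro ⟨hv, htk⟩
      have hvlen := (mem_FN.mp hv).2
      have hsplit : v = v.take n ++ v.drop n := (v.take_append_drop n).symm
      have hdlen : (v.drop n).length = 1 := by simp [hvlen]
      obtain ⟨c, hc⟩ := List.length_eq_one_iff.mp hdlen
      refine ⟨?_, hv⟩
      cases c
      · left; rw [hsplit, htk, hc]
      · right; rw [hsplit, htk, hc]
    · rintro ⟨hv | hv, hmem⟩ <;> subst hv <;>
        exact ⟨hmem, by rw [← hlen, List.take_left]⟩
  rw [hset, card_filter_pair (by simp) _]

lemma fiber_left_card {w : Word} {n : ℕ} {u : Word} (hu : u ∈ FN w n) :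
    ((FN w (n+1)).filter (fun v => v.drop 1 = u)).card
      = (if [a] ++ u ∈ FN w (n+1) then 1 else 0)
        + (if [b] ++ u ∈ FN w (n+1) then 1 else 0) := by
  have hset : (FN w (n+1)).filter (fun v => v.drop 1 = u)
      = ({[a] ++ u, [b] ++ u} : Finset Word).filter (fun v => v ∈ FN w (n+1)) := by
    ext v
    simp only [Finset.mem_filter, Finset.mem_insert, Finset.mem_singleton]
    constructor
    · rintro ⟨hv, htk⟩
      have hvlen := (mem_FN.mp hv).2
      obtain ⟨c, t, rfl⟩ := List.exists_cons_of_ne_nil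
        (show v ≠ [] by intro h; rw [h] at hvlen; simp at hvlen)
      simp only [List.drop_succ_cons, List.drop_zero] at htk
      subst htk
      refine ⟨?_, hv⟩
      cases c
      · left; rfl
      · right; rfl
    · rintro ⟨hv | hv, hmem⟩ <;> subst hv <;> exact ⟨hmem, rfl⟩
  rw [hset, card_filter_pair (by simp) _]

lemma right_identity (w : Word) {n : ℕ} (hn : n ≤ w.length) :
    (FN w (n+1)).card + (if Kp w ≤ n then 1 else 0)
      = (FN w n).card + ((FN w n).filter (fun u => IsRightSpecial u w)).card := by
  have hfib : ∀ v ∈ FN w (n+1), v.take n ∈ FN w n := by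
    intro v hv
    obtain ⟨hinf, hlen⟩ := mem_FN.mp hv
    exact mem_FN.mpr ⟨(v.take_prefix n).isInfix.trans hinf,
      by rw [List.length_take, hlen]; omega⟩
  rw [Finset.card_eq_sum_card_fiberwise hfib]
  have h1 : ∑ u ∈ FN w n, ((FN w (n+1)).filter (fun v => v.take n = u)).card
      = ∑ u ∈ FN w n, ((if u ++ [a] ∈ FN w (n+1) then 1 else 0)
          + (if u ++ [b] ∈ FN w (n+1) then 1 else 0)) :=
    Finset.sum_congr rfl (fun u hu => fiber_right_card hu)
  rw [h1]
  have h2 : (if Kp w ≤ n then 1 else 0)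
      = ∑ u ∈ FN w n, (if u = w.drop (w.length - n) ∧ Kp w ≤ n then 1 else 0) := by
    rw [← Finset.card_filter]
    by_cases hK : Kp w ≤ n
    · simp only [hK, and_true]
      rw [Finset.filter_eq']
      have hmem : w.drop (w.length - n) ∈ FN w n :=
        mem_FN.mpr ⟨(w.drop_suffix _).isInfix, by simp; omega⟩
      simp [hmem]
    · simp [hK]
  have h3 : ((FN w n).filter (fun u => IsRightSpecial u w)).card
      = ∑ u ∈ FN w n, (if IsRightSpecial u w then 1 else 0) := Finset.card_filter _ _
  have hpt : ∀ u ∈ FN w n,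
      ((if u ++ [a] ∈ FN w (n+1) then 1 else 0)
        + (if u ++ [b] ∈ FN w (n+1) then 1 else 0))
      + (if u = w.drop (w.length - n) ∧ Kp w ≤ n then 1 else 0)
      = 1 + (if IsRightSpecial u w then 1 else 0) := by
    intro u hu
    have hRS := RS_iff_mem_FN hu
    have hdead := dead_right_iff hn hu
    by_cases hA : u ++ [a] ∈ FN w (n+1) <;> by_cases hB : u ++ [b] ∈ FN w (n+1)
    · have hd : ¬(u = w.drop (w.length - n) ∧ Kp w ≤ n) := by
        intro hc
        exact (hdead.mpr hc).1 hA
      rw [if_pos hA, if_pos hB, if_neg hd, if_pos (hRS.mpr ⟨hA, hB⟩)]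
    · have hd : ¬(u = w.drop (w.length - n) ∧ Kp w ≤ n) := by
        intro hc
        exact (hdead.mpr hc).1 hA
      have hrs : ¬ IsRightSpecial u w := fun hc => hB (hRS.mp hc).2
      rw [if_pos hA, if_neg hB, if_neg hd, if_neg hrs]
    · have hd : ¬(u = w.drop (w.length - n) ∧ Kp w ≤ n) := by
        intro hc
        exact (hdead.mpr hc).2 hB
      have hrs : ¬ IsRightSpecial u w := fun hc => hA (hRS.mp hc).1
      rw [if_neg hA, if_pos hB, if_neg hd, if_neg hrs]
    · have hd := hdead.mp ⟨hA, hB⟩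
      have hrs : ¬ IsRightSpecial u w := fun hc => hA (hRS.mp hc).1
      rw [if_neg hA, if_neg hB, if_pos hd, if_neg hrs]
  have h4 := Finset.sum_congr rfl hpt
  rw [h2, h3, ← Finset.sum_add_distrib, h4, Finset.sum_add_distrib,
    ← Finset.card_eq_sum_ones]

lemma left_identity (w : Word) {n : ℕ} (hn : n ≤ w.length) :
    (FN w (n+1)).card + (if Hp w ≤ n then 1 else 0)
      = (FN w n).card + ((FN w n).filter (fun u => IsLeftSpecial u w)).card := by
  have hfib : ∀ v ∈ FN w (n+1), v.drop 1 ∈ FN w n := by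
    intro v hv
    obtain ⟨hinf, hlen⟩ := mem_FN.mp hv
    exact mem_FN.mpr ⟨(v.drop_suffix 1).isInfix.trans hinf,
      by rw [List.length_drop, hlen]; omega⟩
  rw [Finset.card_eq_sum_card_fiberwise hfib]
  have h1 : ∑ u ∈ FN w n, ((FN w (n+1)).filter (fun v => v.drop 1 = u)).card
      = ∑ u ∈ FN w n, ((if [a] ++ u ∈ FN w (n+1) then 1 else 0)
          + (if [b] ++ u ∈ FN w (n+1) then 1 else 0)) :=
    Finset.sum_congr rfl (fun u hu => fiber_left_card hu)
  rw [h1]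
  have h2 : (if Hp w ≤ n then 1 else 0)
      = ∑ u ∈ FN w n, (if u = w.take n ∧ Hp w ≤ n then 1 else 0) := by
    rw [← Finset.card_filter]
    by_cases hH : Hp w ≤ n
    · simp only [hH, and_true]
      rw [Finset.filter_eq']
      have hmem : w.take n ∈ FN w n :=
        mem_FN.mpr ⟨(w.take_prefix _).isInfix, by simp; omega⟩
      simp [hmem]
    · simp [hH]
  have h3 : ((FN w n).filter (fun u => IsLeftSpecial u w)).card
      = ∑ u ∈ FN w n, (if IsLeftSpecial u w then 1 else 0) := Finset.card_filter _ _
  have hpt : ∀ u ∈ FN w n,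
      ((if [a] ++ u ∈ FN w (n+1) then 1 else 0)
        + (if [b] ++ u ∈ FN w (n+1) then 1 else 0))
      + (if u = w.take n ∧ Hp w ≤ n then 1 else 0)
      = 1 + (if IsLeftSpecial u w then 1 else 0) := by
    intro u hu
    have hLS := LS_iff_mem_FN hu
    have hdead := dead_left_iff hn hu
    by_cases hA : [a] ++ u ∈ FN w (n+1) <;> by_cases hB : [b] ++ u ∈ FN w (n+1)
    · have hd : ¬(u = w.take n ∧ Hp w ≤ n) := by
        intro hc
        exact (hdead.mpr hc).1 hA
      rw [if_pos hA, if_pos hB, if_neg hd, if_pos (hLS.mpr ⟨hA, hB⟩)]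
    · have hd : ¬(u = w.take n ∧ Hp w ≤ n) := by
        intro hc
        exact (hdead.mpr hc).1 hA
      have hrs : ¬ IsLeftSpecial u w := fun hc => hB (hLS.mp hc).2
      rw [if_pos hA, if_neg hB, if_neg hd, if_neg hrs]
    · have hd : ¬(u = w.take n ∧ Hp w ≤ n) := by
        intro hc
        exact (hdead.mpr hc).2 hB
      have hrs : ¬ IsLeftSpecial u w := fun hc => hA (hLS.mp hc).1
      rw [if_neg hA, if_pos hB, if_neg hd, if_neg hrs]
    · have hd := hdead.mp ⟨hA, hB⟩
      have hrs : ¬ IsLeftSpecial u w := fun hc => hA (hLS.mp hc).1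
      rw [if_neg hA, if_neg hB, if_pos hd, if_neg hrs]
  have h4 := Finset.sum_congr rfl hpt
  rw [h2, h3, ← Finset.sum_add_distrib, h4, Finset.sum_add_distrib,
    ← Finset.card_eq_sum_ones]

/-- The star identity. -/
lemma star_identity (w : Word) {n : ℕ} (hn : n ≤ w.length) :
    ((FN w n).filter (fun u => IsRightSpecial u w)).card + (if Hp w ≤ n then 1 else 0)
      = ((FN w n).filter (fun u => IsLeftSpecial u w)).card
        + (if Kp w ≤ n then 1 else 0) := by
  have h1 := right_identity w hn
  have h2 := left_identity w hn
  omega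

end Identities

section TrapCount

open List Finset

lemma rs_card_pos_iff {w : Word} {n : ℕ} :
    0 < ((FN w n).filter (fun u => IsRightSpecial u w)).card ↔ n < Rp w := by
  rw [Finset.card_pos]
  constructor
  · rintro ⟨u, hu⟩
    rw [Finset.mem_filter, mem_FN] at hu
    exact lt_Rp_iff.mpr ⟨u, hu.1.2, hu.2⟩
  · intro h
    obtain ⟨u, hlen, hRS⟩ := lt_Rp_iff.mp h
    refine ⟨u, Finset.mem_filter.mpr ⟨mem_FN.mpr ⟨?_, hlen⟩, hRS⟩⟩
    exact (u.prefix_append [a]).isInfix.trans hRS.1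

lemma ls_card_pos_iff {w : Word} {n : ℕ} :
    0 < ((FN w n).filter (fun u => IsLeftSpecial u w)).card ↔ n < Lp w := by
  rw [Finset.card_pos]
  constructor
  · rintro ⟨u, hu⟩
    rw [Finset.mem_filter, mem_FN] at hu
    exact lt_Lp_iff.mpr ⟨u, hu.1.2, hu.2⟩
  · intro h
    obtain ⟨u, hlen, hLS⟩ := lt_Lp_iff.mp h
    refine ⟨u, Finset.mem_filter.mpr ⟨mem_FN.mpr ⟨?_, hlen⟩, hLS⟩⟩
    exact ((List.suffix_append [a] u).isInfix).trans hLS.1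

lemma sum_ite_le (K m : ℕ) :
    ∑ n ∈ Finset.range m, (if K ≤ n then 1 else 0) = m - K := by
  induction m with
  | zero => simp
  | succ m ih =>
    rw [Finset.sum_range_succ, ih]
    split_ifs with h <;> omega

lemma sum_rs_telescope (w : Word) :
    ∀ N, N ≤ w.length + 1 →
      (FN w N).card + ∑ n ∈ Finset.range N, (if Kp w ≤ n then 1 else 0)
        = 1 + ∑ n ∈ Finset.range N,
            ((FN w n).filter (fun u => IsRightSpecial u w)).card := by
  intro N
  induction N with
  | zero => simp [FN_card_zero]
  | succ m ih =>
    intro hm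
    have h1 := right_identity w (n := m) (by omega)
    have h2 := ih (by omega)
    rw [Finset.sum_range_succ, Finset.sum_range_succ]
    omega

lemma sum_rs_total (w : Word) :
    Kp w + ∑ n ∈ Finset.range (w.length + 1),
        ((FN w n).filter (fun u => IsRightSpecial u w)).card = w.length := by
  have h := sum_rs_telescope w (w.length + 1) le_rfl
  rw [FN_eq_empty (by omega), sum_ite_le] at h
  have hK := Kp_le_length w
  simp only [Finset.card_empty, Nat.zero_add] at h
  omega

lemma sum_eq_card_forall_one {s : Finset ℕ} {f : ℕ → ℕ}
    (h1 : ∀ i ∈ s, 1 ≤ f i) (h2 : ∑ i ∈ s, f i = s.card) :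
    ∀ i ∈ s, f i = 1 := by
  by_contra hc
  push_neg at hc
  obtain ⟨i, hi, hne⟩ := hc
  have hlt : ∑ j ∈ s, (1 : ℕ) < ∑ j ∈ s, f j :=
    Finset.sum_lt_sum h1 ⟨i, hi, by have := h1 i hi; omega⟩
  rw [Finset.sum_const, smul_eq_mul, mul_one] at hlt
  omega

lemma trap_rs_card {w : Word} (htrap : IsTrapezoidal w) {n : ℕ} (hn : n < Rp w) :
    ((FN w n).filter (fun u => IsRightSpecial u w)).card = 1 := by
  have htot := sum_rs_total w
  have hR := Rp_le_length w
  -- split the sum at Rp w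
  have hsplit : ∑ n ∈ Finset.range (w.length + 1),
      ((FN w n).filter (fun u => IsRightSpecial u w)).card
      = ∑ n ∈ Finset.range (Rp w),
          ((FN w n).filter (fun u => IsRightSpecial u w)).card := by
    have hcons := Finset.sum_Ico_consecutive
      (f := fun n => ((FN w n).filter (fun u => IsRightSpecial u w)).card)
      (Nat.zero_le (Rp w)) (by omega : Rp w ≤ w.length + 1)
    rw [Finset.range_eq_Ico, Finset.range_eq_Ico, ← hcons]
    have : ∑ n ∈ Finset.Ico (Rp w) (w.length + 1),
        ((FN w n).filter (fun u => IsRightSpecial u w)).card = 0 := by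
      apply Finset.sum_eq_zero
      intro n hn'
      rw [Finset.mem_Ico] at hn'
      by_contra hne
      have hpos : 0 < ((FN w n).filter (fun u => IsRightSpecial u w)).card := by omega
      have := rs_card_pos_iff.mp hpos
      omega
    omega
  rw [hsplit] at htot
  have hsum : ∑ n ∈ Finset.range (Rp w),
      ((FN w n).filter (fun u => IsRightSpecial u w)).card = (Finset.range (Rp w)).card := by
    rw [Finset.card_range]
    have := htrap
    unfold IsTrapezoidal at this
    omega
  exact sum_eq_card_forall_one
    (fun i hi => rs_card_pos_iff.mpr (Finset.mem_range.mp hi)) hsum n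
    (Finset.mem_range.mpr hn)

lemma trap_RS_unique {w : Word} (htrap : IsTrapezoidal w) {n : ℕ} (hn : n < Rp w)
    {u v : Word} (hu : u.length = n) (hru : IsRightSpecial u w)
    (hv : v.length = n) (hrv : IsRightSpecial v w) : u = v := by
  have hcard := trap_rs_card htrap hn
  have hum : u ∈ (FN w n).filter (fun u => IsRightSpecial u w) :=
    Finset.mem_filter.mpr ⟨mem_FN.mpr ⟨(u.prefix_append [a]).isInfix.trans hru.1, hu⟩, hru⟩
  have hvm : v ∈ (FN w n).filter (fun u => IsRightSpecial u w) :=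
    Finset.mem_filter.mpr ⟨mem_FN.mpr ⟨(v.prefix_append [a]).isInfix.trans hrv.1, hv⟩, hrv⟩
  exact Finset.card_le_one.mp (le_of_eq hcard) u hum v hvm

end TrapCount

section Core

open List

lemma OccursAt.of_prefix {u u' w : Word} {i : ℕ} (h : OccursAt u' w i) (hp : u <+: u') :
    OccursAt u w i := by
  rw [occursAt_iff_prefix_drop] at h ⊢
  exact ⟨by have := hp.length_le; omega, hp.trans h.2⟩

lemma OccursAt.of_suffix {u u' w : Word} {i : ℕ} (h : OccursAt u' w i) (hs : u <:+ u') :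
    OccursAt u w (i + (u'.length - u.length)) := by
  obtain ⟨x, rfl⟩ := hs
  have hx : (x ++ u).length - u.length = x.length := by simp
  rw [hx]
  exact (occursAt_append_iff.mp h).2

lemma Hp_pos {w : Word} (hw : w ≠ []) : 1 ≤ Hp w := by
  by_contra hc
  push_neg at hc
  have h0 : Hp w ≤ 0 := by omega
  have := (Hp_le_iff (Nat.zero_le _)).mp h0
  simp only [List.take_zero] at this
  obtain ⟨j, hj, hju⟩ := this
  have h1 : OccursAt ([] : Word) w 0 := by
    rw [occursAt_iff_prefix_drop]
    simp
  have h2 : OccursAt ([] : Word) w 1 := by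
    rw [occursAt_iff_prefix_drop]
    have : 1 ≤ w.length := by
      cases w with
      | nil => exact absurd rfl hw
      | cons c t => simp
    simpa using this
  have := hju 0 h1
  have := hju 1 h2
  omega

lemma RS_drop_one {u w : Word} (h : IsRightSpecial u w) : IsRightSpecial (u.drop 1) w := by
  rcases u with _ | ⟨c, t⟩
  · simpa using h
  · obtain ⟨ha, hb⟩ := h
    have hsa : t ++ [a] <:+ (c :: t) ++ [a] := ⟨[c], rfl⟩
    have hsb : t ++ [b] <:+ (c :: t) ++ [b] := ⟨[c], rfl⟩
    exact ⟨hsa.isInfix.trans ha, hsb.isInfix.trans hb⟩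

/-- In a closed word, `H = |v| + 1` and `K = |v| + 1` where `v` is the witness border. -/
lemma closed_Hp_eq_Kp {w : Word} (hc : IsClosedWord w) : Hp w = Kp w := by
  obtain ⟨hw, v, hvp, hvlen, hvs, hvocc⟩ := hc
  have hvtake : v = w.take v.length := prefix_eq_take hvp
  have hvdrop : v = w.drop (w.length - v.length) := suffix_eq_drop hvs
  have hvend : OccursAt v w (w.length - v.length) :=
    (occursAt_end_iff (by omega)).mpr hvs
  -- H = |v| + 1
  have hH1 : Hp w ≤ v.length + 1 := by
    rw [Hp_le_iff (by omega)]
    refine ⟨0, occursAt_zero_iff.mpr (w.take_prefix _), fun i hi => ?_⟩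
    have hvp' : v <+: w.take (v.length + 1) :=
      List.prefix_take_iff.mpr ⟨hvp, by omega⟩
    have hocc := hi.of_prefix hvp'
    rcases hvocc i hocc with h0 | hend
    · exact h0
    · have hb := hi.1
      rw [List.length_take] at hb
      omega
  have hH2 : ¬ (Hp w ≤ v.length) := by
    intro hle
    obtain ⟨j, hj, hju⟩ := (Hp_le_iff (Hp_le_length w)).mp le_rfl
    have h0 : OccursAt (w.take (Hp w)) w 0 := occursAt_zero_iff.mpr (w.take_prefix _)
    have hpv : w.take (Hp w) <+: v := by
      rw [hvtake]
      exact List.prefix_take_iff.mpr ⟨w.take_prefix _, by simp; omega⟩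
    have h1 : OccursAt (w.take (Hp w)) w (w.length - v.length) := hvend.of_prefix hpv
    have e0 := hju 0 h0
    have e1 := hju _ h1
    omega
  -- K = |v| + 1
  have hK1 : Kp w ≤ v.length + 1 := by
    rw [Kp_le_iff (by omega)]
    set s := w.drop (w.length - (v.length + 1)) with hs
    have hslen : s.length = v.length + 1 := by rw [hs]; simp; omega
    have hsocc : OccursAt s w (w.length - (v.length + 1)) := by
      have := (occursAt_end_iff (u := s) (w := w) (by omega)).mpr (w.drop_suffix _)
      rwa [hslen] at this
    refine ⟨w.length - (v.length + 1), hsocc, fun i hi => ?_⟩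
    have hvsuf : v <:+ s := by
      have : s.drop 1 = w.drop (w.length - v.length) := by
        rw [hs, List.drop_drop]
        congr 1
        omega
      rw [hvdrop, ← this]
      exact s.drop_suffix 1
    have hocc := hi.of_suffix hvsuf
    have hlen2 : s.length - v.length = 1 := by omega
    rw [hlen2] at hocc
    rcases hvocc _ hocc with h0 | hend
    · omega
    · have hb := hi.1
      rw [hslen] at hb
      omega
  have hK2 : ¬ (Kp w ≤ v.length) := by
    intro hle
    obtain ⟨j, hj, hju⟩ := (Kp_le_iff (Kp_le_length w)).mp le_rfl
    have hKl := Kp_le_length w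
    set s := w.drop (w.length - Kp w) with hs
    have hslen : s.length = Kp w := by rw [hs, List.length_drop]; omega
    have h1 : OccursAt s w (w.length - Kp w) := by
      have := (occursAt_end_iff (u := s) (w := w) (by omega)).mpr (w.drop_suffix _)
      rwa [hslen] at this
    have hsv : s <:+ v := by
      rw [hvdrop, hs]
      have heq : w.length - Kp w = (w.length - v.length) + (v.length - Kp w) := by omega
      rw [heq, ← List.drop_drop]
      exact (w.drop (w.length - v.length)).drop_suffix _
    have h2 : OccursAt s w (0 + (v.length - s.length)) :=
      (occursAt_zero_iff.mpr hvp).of_suffix hsv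
    have e1 := hju _ h1
    have e2 := hju _ h2
    rw [hslen] at e2
    omega
  omega

/-- In an open word, the longest repeated prefix is right special. -/
lemma open_RS {w : Word} (ho : IsOpenWord w) :
    IsRightSpecial (w.take (Hp w - 1)) w := by
  obtain ⟨hw, hnc⟩ := ho
  have hH1 : 1 ≤ Hp w := Hp_pos hw
  have hHl : Hp w ≤ w.length := Hp_le_length w
  set v := w.take (Hp w - 1) with hv
  have hvlen : v.length = Hp w - 1 := by rw [hv]; simp; omega
  have hd : w.take (Hp w) = v ++ [w[Hp w - 1]'(by omega)] := by
    rw [hv, ← take_succ_eq (show Hp w - 1 < w.length by omega)]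
    congr 1
    omega
  have honce : OccursOnce (w.take (Hp w)) w := (Hp_le_iff hHl).mp le_rfl
  obtain ⟨j0, hj0, hj0u⟩ := honce
  have hj0e : j0 = 0 := (hj0u 0 (occursAt_zero_iff.mpr (w.take_prefix _))).symm
  -- v is repeated: some occurrence i ≠ 0
  have hrep : ∃ i, OccursAt v w i ∧ i ≠ 0 := by
    by_contra hcon
    push_neg at hcon
    have : OccursOnce v w := by
      refine ⟨0, occursAt_zero_iff.mpr (w.take_prefix _), fun i hi => ?_⟩
      by_contra hne
      exact hne (hcon i hi)
    have : Hp w ≤ Hp w - 1 := (Hp_le_iff (by omega)).mpr this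
    omega
  obtain ⟨i, hi, hine⟩ := hrep
  by_contra hRS
  apply hnc
  refine ⟨hw, v, w.take_prefix _, by omega, ?_, ?_⟩
  all_goals {
    have hkey : ∀ k, OccursAt v w k → k = 0 ∨ k + v.length = w.length := by
      intro k hk
      by_contra hcon
      push_neg at hcon
      obtain ⟨hk0, hkend⟩ := hcon
      have hklt : k + v.length < w.length := by
        have := hk.1; omega
      have hnext := hk.next_letter hklt
      have htakeHocc : ¬ OccursAt (w.take (Hp w)) w k := by
        intro hcontra
        have := hj0u k hcontra
        omega
      cases hca : w[k + v.length]'(by omega) with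
      | a =>
        cases hcb : w[Hp w - 1]'(by omega) with
        | a =>
          apply htakeHocc
          rw [hca] at hnext
          rw [hd, hcb]
          exact hnext
        | b =>
          apply hRS
          rw [hca] at hnext
          refine ⟨hnext.infix, ?_⟩
          have hvd : v ++ [b] = w.take (Hp w) := by rw [hd, hcb]
          rw [hvd]
          exact (w.take_prefix _).isInfix
      | b =>
        cases hcb : w[Hp w - 1]'(by omega) with
        | b =>
          apply htakeHocc
          rw [hca] at hnext
          rw [hd, hcb]
          exact hnext
        | a =>
          apply hRS
          rw [hca] at hnext
          refine ⟨?_, hnext.infix⟩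
          have hvd : v ++ [a] = w.take (Hp w) := by rw [hd, hcb]
          rw [hvd]
          exact (w.take_prefix _).isInfix
    first
    | -- v <:+ w
      (have hiend : i + v.length = w.length := by
        rcases hkey i hi with h0 | he
        · exact absurd h0 hine
        · exact he
       exact hi.suffix_of_end hiend)
    | exact hkey
  }

lemma open_Hp_le_Rp {w : Word} (ho : IsOpenWord w) : Hp w ≤ Rp w := by
  have hRS := open_RS ho
  have hH1 : 1 ≤ Hp w := Hp_pos ho.1
  have hHl : Hp w ≤ w.length := Hp_le_length w
  have : Hp w - 1 < Rp w := lt_Rp_iff.mpr ⟨_, by simp; omega, hRS⟩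
  omega

lemma open_trap_Hp_eq_Rp {w : Word} (htrap : IsTrapezoidal w) (ho : IsOpenWord w) :
    Hp w = Rp w := by
  have hle := open_Hp_le_Rp ho
  have hH1 : 1 ≤ Hp w := Hp_pos ho.1
  have hHl : Hp w ≤ w.length := Hp_le_length w
  by_contra hne
  have hlt : Hp w < Rp w := by omega
  obtain ⟨u, hulen, huRS⟩ := lt_Rp_iff.mp hlt
  have hvRS := open_RS ho
  have hvlen : (w.take (Hp w - 1)).length = Hp w - 1 := by simp; omega
  have hu' : u.drop 1 = w.take (Hp w - 1) := by
    apply trap_RS_unique htrap (show Hp w - 1 < Rp w by omega)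
      (by simp [hulen]) (RS_drop_one huRS) hvlen hvRS
  obtain ⟨c, t, rfl⟩ := List.exists_cons_of_ne_nil
    (show u ≠ [] by intro h; rw [h] at hulen; simp at hulen; omega)
  simp only [List.drop_succ_cons, List.drop_zero] at hu'
  subst hu'
  -- c :: take (Hp-1) ++ [d] is a factor where d = w[Hp-1]; contradiction with take Hp occurring once
  have honce : OccursOnce (w.take (Hp w)) w := (Hp_le_iff hHl).mp le_rfl
  obtain ⟨j0, hj0, hj0u⟩ := honce
  have hj0e : j0 = 0 := (hj0u 0 (occursAt_zero_iff.mpr (w.take_prefix _))).symm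
  have hd : w.take (Hp w) = w.take (Hp w - 1) ++ [w[Hp w - 1]'(by omega)] := by
    rw [← take_succ_eq (show Hp w - 1 < w.length by omega)]
    congr 1
    omega
  have hinf : (c :: w.take (Hp w - 1)) ++ [w[Hp w - 1]'(by omega)] <:+: w := by
    cases hcb : w[Hp w - 1]'(by omega) with
    | a => exact hcb ▸ huRS.1
    | b => exact hcb ▸ huRS.2
  obtain ⟨j, hj⟩ := infix_iff_occursAt.mp hinf
  have : (c :: w.take (Hp w - 1)) ++ [w[Hp w - 1]'(by omega)]
      = c :: w.take (Hp w) := by rw [hd]; rfl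
  rw [this] at hj
  have := hj.cons
  have := hj0u _ this
  omega

end Core

section Final

open List Finset

lemma closed_Lp_eq_Rp {w : Word} (hc : IsClosedWord w) : Lp w = Rp w := by
  have hHK := closed_Hp_eq_Kp hc
  have hstar : ∀ n, n ≤ w.length →
      ((FN w n).filter (fun u => IsRightSpecial u w)).card
        = ((FN w n).filter (fun u => IsLeftSpecial u w)).card := by
    intro n hn
    have h := star_identity w hn
    rw [hHK] at h
    omega
  have hR := Rp_le_length w
  have hL := Lp_le_length w
  have h1 : ¬ (Rp w < Lp w) := by
    intro h
    have hpos := ls_card_pos_iff.mpr h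
    rw [← hstar _ hR] at hpos
    have := rs_card_pos_iff.mp hpos
    omega
  have h2 : ¬ (Lp w < Rp w) := by
    intro h
    have hpos := rs_card_pos_iff.mpr h
    rw [hstar _ hL] at hpos
    have := ls_card_pos_iff.mp hpos
    omega
  omega

lemma open_trap_Lp_eq_Kp {w : Word} (htrap : IsTrapezoidal w) (ho : IsOpenWord w) :
    Lp w = Kp w := by
  have hHR := open_trap_Hp_eq_Rp htrap ho
  have hK := Kp_le_length w
  have hL := Lp_le_length w
  have h1 : ¬ (Kp w < Lp w) := by
    intro h
    have hstar := star_identity w (n := Kp w) hK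
    rw [hHR] at hstar
    have hlspos := ls_card_pos_iff.mpr h
    rcases Nat.lt_or_ge (Kp w) (Rp w) with hcase | hcase
    · have hrs := trap_rs_card htrap hcase
      have hite1 : ¬ (Rp w ≤ Kp w) := by omega
      rw [if_neg hite1, if_pos le_rfl] at hstar
      omega
    · have hrs0 : ((FN w (Kp w)).filter (fun u => IsRightSpecial u w)).card = 0 := by
        by_contra hne
        have hpos : 0 < ((FN w (Kp w)).filter (fun u => IsRightSpecial u w)).card :=
          Nat.pos_of_ne_zero hne
        have := rs_card_pos_iff.mp hpos
        omega
      rw [if_pos hcase, if_pos le_rfl] at hstar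
      omega
  have h2 : ¬ (Lp w < Kp w) := by
    intro h
    have hstar := star_identity w (n := Lp w) hL
    rw [hHR] at hstar
    have hls0 : ((FN w (Lp w)).filter (fun u => IsLeftSpecial u w)).card = 0 := by
      by_contra hne
      have hpos : 0 < ((FN w (Lp w)).filter (fun u => IsLeftSpecial u w)).card :=
        Nat.pos_of_ne_zero hne
      have := ls_card_pos_iff.mp hpos
      omega
    have hKL : ¬ (Kp w ≤ Lp w) := by omega
    rw [if_neg hKL, hls0] at hstar
    rcases Nat.lt_or_ge (Lp w) (Rp w) with hcase | hcase
    · have hrs := trap_rs_card htrap hcase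
      omega
    · have hite : Rp w ≤ Lp w := hcase
      rw [if_pos hite] at hstar
      omega
  omega

end Final

/-- for trapezoidal words, `H = K`, `L = R` if closed and `H = R`, `L = K` if open. -/
theorem trapezoidal_param_identities (w : Word) (htrap : IsTrapezoidal w) :
    (IsClosedWord w → Hp w = Kp w ∧ Lp w = Rp w) ∧
    (IsOpenWord w → Hp w = Rp w ∧ Lp w = Kp w) := by
  constructor
  · intro hc
    exact ⟨closed_Hp_eq_Kp hc, closed_Lp_eq_Rp hc⟩
  · intro ho
    exact ⟨open_trap_Hp_eq_Rp htrap ho, open_trap_Lp_eq_Kp htrap ho⟩
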